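/- Let M ≥ 1 and let q₀^{(j)}, q₁^{(j)} (0 ≤ j ≤ M−1) and e₀ be positive real numbers. Define α_{−1} = 1, α₀ = e₀ + q₁^{(M−1)}, and α_i = α_{i−1} q₁^{(M−i−1)} + e₀ ∏_{j=0}^{i−1} q₀^{(M−j−1)} for 1 ≤ i ≤ M−1. Set q̃₀^{(i)} = q₁^{(i)} q₀^{(i)} α_{M−2−i} / α_{M−1−i} and q̃₁^{(i)} = α_{M−1−i} / α_{M−2−i} for 0 ≤ i ≤ M−1. Define β₀ = 1 and β_i = β_{i−1} q₀^{(i)} + ∏_{j=0}^{i−1} q₁^{(j)} for 1 ≤ i ≤ M−1, and define β̃_i by the same recursion with q̃₀, q̃₁ in place of q₀, q₁. Then β̃_i = β_i for every 0 ≤ i ≤ M−1; that is, the quantities β_i are conserved by the birational transformation. -/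
import Mathlib


/-- `alphaS M q0 q1 e0 (i+1) = α_i` of the paper, with the convention `alphaS M q0 q1 e0 0 = α_{-1} = 1`:
`α_0 = e0 + q1^{(M-1)}`, `α_i = α_{i-1} q1^{(M-i-1)} + e0 ∏_{j<i} q0^{(M-j-1)}`. -/
noncomputable def alphaS (M : ℕ) (q0 q1 : ℕ → ℝ) (e0 : ℝ) : ℕ → ℝ
  | 0 => 1
  | 1 => e0 + q1 (M - 1)
  | i + 2 => alphaS M q0 q1 e0 (i + 1) * q1 (M - i - 2) +
      e0 * ∏ j ∈ Finset.range (i + 1), q0 (M - j - 1)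

/-- `betaRec q0 q1 i = β_i`: `β_0 = 1`, `β_i = β_{i-1} q0^{(i)} + ∏_{j<i} q1^{(j)}`. -/
noncomputable def betaRec (q0 q1 : ℕ → ℝ) : ℕ → ℝ
  | 0 => 1
  | i + 1 => betaRec q0 q1 i * q0 (i + 1) + ∏ j ∈ Finset.range (i + 1), q1 j

lemma alpha_rec (M : ℕ) (q0 q1 : ℕ → ℝ) (e0 : ℝ) (k : ℕ) (hk : 1 ≤ k) :
    alphaS M q0 q1 e0 k = alphaS M q0 q1 e0 (k - 1) * q1 (M - k) +
      e0 * ∏ j ∈ Finset.range (k - 1), q0 (M - j - 1) := by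
  match k, hk with
  | 1, _ => simp [alphaS]; ring
  | (m+2), _ =>
    have e1 : M - (m+2) = M - m - 2 := by omega
    have e2 : m + 2 - 1 = m + 1 := by omega
    rw [e1, e2]
    rfl

lemma alpha_pos (M : ℕ) (q0 q1 : ℕ → ℝ) (e0 : ℝ) (hM : 1 ≤ M)
    (hq0 : ∀ j < M, 0 < q0 j) (hq1 : ∀ j < M, 0 < q1 j) (he0 : 0 < e0) :
    ∀ k, k ≤ M → 0 < alphaS M q0 q1 e0 k := by
  intro k
  induction k with
  | zero => intro _; norm_num [alphaS]
  | succ m ih =>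
    intro hm
    match m, ih, hm with
    | 0, _, _ =>
      have : 0 < q1 (M - 1) := hq1 _ (by omega)
      simp only [alphaS]; positivity
    | (n+1), ih, hm =>
      have h1 : 0 < alphaS M q0 q1 e0 (n+1) := ih (by omega)
      have h2 : 0 < q1 (M - n - 2) := hq1 _ (by omega)
      have h3 : 0 < ∏ j ∈ Finset.range (n + 1), q0 (M - j - 1) :=
        Finset.prod_pos (fun j hj => hq0 _ (by simp at hj; omega))
      show 0 < alphaS M q0 q1 e0 (n+1) * q1 (M - n - 2) +
          e0 * ∏ j ∈ Finset.range (n + 1), q0 (M - j - 1)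
      positivity

lemma alpha_key (M : ℕ) (q0 q1 : ℕ → ℝ) (e0 : ℝ) (hM : 1 ≤ M) :
    ∀ i < M, alphaS M q0 q1 e0 M =
      (∏ j ∈ Finset.range (i + 1), q1 j) * alphaS M q0 q1 e0 (M - 1 - i) +
      e0 * betaRec q0 q1 i * ∏ j ∈ Finset.range (M - 1 - i), q0 (M - j - 1) := by
  intro i
  induction i with
  | zero =>
    intro _
    have h := alpha_rec M q0 q1 e0 M hM
    have e1 : M - M = 0 := by omega
    rw [e1] at h
    simpa [betaRec] using h.trans (by ring)
  | succ n ih =>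
    intro h
    have hrec := alpha_rec M q0 q1 e0 (M - 1 - n) (by omega)
    have e4 : M - 1 - n - 1 = M - n - 2 := by omega
    have e5 : M - (M - 1 - n) = n + 1 := by omega
    rw [e4, e5] at hrec
    have hkey := ih (by omega)
    have e3 : M - 1 - n = (M - n - 2) + 1 := by omega
    have e6 : M - (M - n - 2) - 1 = n + 1 := by omega
    have hp : (∏ j ∈ Finset.range (M - n - 2 + 1), q0 (M - j - 1)) =
        (∏ j ∈ Finset.range (M - n - 2), q0 (M - j - 1)) * q0 (n + 1) := by
      rw [Finset.prod_range_succ, e6]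
    rw [e3] at hkey
    rw [hp] at hkey
    rw [e3] at hrec
    have e7 : M - 1 - (n + 1) = M - n - 2 := by omega
    rw [e7, betaRec, Finset.prod_range_succ]
    rw [hkey, hrec]
    ring

/-- the quantities `β_i` are conserved by the birational transformation
`q̃0^{(i)} = q1^{(i)} q0^{(i)} α_{M-2-i}/α_{M-1-i}`, `q̃1^{(i)} = α_{M-1-i}/α_{M-2-i}`. -/
theorem stmt_11 (M : ℕ) (hM : 1 ≤ M) (q0 q1 : ℕ → ℝ) (e0 : ℝ)
    (hq0 : ∀ j < M, 0 < q0 j) (hq1 : ∀ j < M, 0 < q1 j) (he0 : 0 < e0) :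
    let qt0 : ℕ → ℝ := fun i =>
      q1 i * q0 i * alphaS M q0 q1 e0 (M - 1 - i) / alphaS M q0 q1 e0 (M - i)
    let qt1 : ℕ → ℝ := fun i =>
      alphaS M q0 q1 e0 (M - i) / alphaS M q0 q1 e0 (M - 1 - i)
    ∀ i < M, betaRec qt0 qt1 i = betaRec q0 q1 i := by
  intro qt0 qt1
  set A := alphaS M q0 q1 e0 with hA
  have hpos : ∀ k, k ≤ M → 0 < A k := alpha_pos M q0 q1 e0 hM hq0 hq1 he0
  have hqt0 : ∀ i, qt0 i = q1 i * q0 i * A (M - 1 - i) / A (M - i) := fun i => rfl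
  have hqt1 : ∀ i, qt1 i = A (M - i) / A (M - 1 - i) := fun i => rfl
  have hprod : ∀ i, i < M → ∏ j ∈ Finset.range (i + 1), qt1 j = A M / A (M - 1 - i) := by
    intro i
    induction i with
    | zero => intro _; simp [hqt1]
    | succ n ih =>
      intro h
      rw [Finset.prod_range_succ, ih (by omega), hqt1]
      have e1 : M - (n + 1) = M - 1 - n := by omega
      rw [e1]
      have h1 : A (M - 1 - n) ≠ 0 := ne_of_gt (hpos _ (by omega))
      field_simp
  intro i
  induction i with
  | zero => intro _; rfl
  | succ n ih =>
    intro h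
    have hn : n < M := by omega
    rw [betaRec, betaRec, ih hn, hprod n hn, hqt0]
    have e1 : M - (n + 1) = M - 1 - n := by omega
    have e2 : M - 1 - (n + 1) = M - n - 2 := by omega
    have e3 : M - 1 - n = (M - n - 2) + 1 := by omega
    rw [e1, e2, e3]
    have hrec := alpha_rec M q0 q1 e0 (M - 1 - n) (by omega)
    have e4 : M - 1 - n - 1 = M - n - 2 := by omega
    have e5 : M - (M - 1 - n) = n + 1 := by omega
    rw [e4, e5, e3] at hrec
    have hkey := alpha_key M q0 q1 e0 hM n hn
    have e6 : M - (M - n - 2) - 1 = n + 1 := by omega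
    have hp : (∏ j ∈ Finset.range (M - n - 2 + 1), q0 (M - j - 1)) =
        (∏ j ∈ Finset.range (M - n - 2), q0 (M - j - 1)) * q0 (n + 1) := by
      rw [Finset.prod_range_succ, e6]
    rw [e3, hp] at hkey
    rw [← hA] at hrec hkey
    have hne : A (M - n - 2 + 1) ≠ 0 := ne_of_gt (hpos _ (by omega))
    have hne2 : A (M - n - 2) ≠ 0 := ne_of_gt (hpos _ (by omega))
    field_simp
    linear_combination hkey - betaRec q0 q1 n * q0 (n + 1) * hrec
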